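/- For each integer k ≥ 1, there exists a finite connected graph G_k such that 2·γ(G_k) − γ_t(G_k □ K₂) = k. -/

import Mathlib

open SimpleGraph

/-- The complete graph on two vertices. -/
abbrev K2 : SimpleGraph (Fin 2) := ⊤

/-- `S` is a dominating set of `G`: every vertex not in `S` is adjacent to a vertex of `S`. -/
def IsDominatingSet {V : Type*} (G : SimpleGraph V) (S : Finset V) : Prop :=
  ∀ v : V, v ∉ S → ∃ u ∈ S, G.Adj v u

/-- `S` is a total dominating set of `G`: every vertex is adjacent to a vertex of `S`. -/
def IsTotalDominatingSet {V : Type*} (G : SimpleGraph V) (S : Finset V) : Prop :=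
  ∀ v : V, ∃ u ∈ S, G.Adj v u

/-- The domination number of `G`. -/
noncomputable def dominationNumber {V : Type*} (G : SimpleGraph V) : ℕ :=
  sInf {n : ℕ | ∃ S : Finset V, IsDominatingSet G S ∧ S.card = n}

/-- The total domination number of `G`. -/
noncomputable def totalDominationNumber {V : Type*} (G : SimpleGraph V) : ℕ :=
  sInf {n : ℕ | ∃ S : Finset V, IsTotalDominatingSet G S ∧ S.card = n}

/-! ### Auxiliary construction

The gadget `Q` is a 5-cycle `0-5-2-1-6-0` together with a pendant path `0-3-4`.
It satisfies `γ(Q) = 3` and `γₜ(Q □ K₂) = 5`, in a "robust" way at the vertex `0`: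
even the vertices other than `0` cannot be (totally, for the prism) dominated by
fewer vertices.  The graph `G_k` is a chain of `k` copies of `Q`, consecutive copies
joined by an edge between their `0`-vertices.  Then `γ(G_k) = 3k`,
`γₜ(G_k □ K₂) = 5k`, and `2·3k - 5k = k`. -/

/-- Adjacency of the gadget. -/
def gadj (i j : Fin 7) : Bool :=
  (i.val, j.val) ∈ [(0,3),(3,0),(0,5),(5,0),(0,6),(6,0),(1,2),(2,1),(1,6),(6,1),(2,5),(5,2),(3,4),(4,3)]

lemma gadj_symm : ∀ i j : Fin 7, gadj i j = gadj j i := by decide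

lemma gadj_irrefl : ∀ i : Fin 7, gadj i i = false := by decide

/-- A prism vertex `p` openly covers target `(i,s)`. -/
def pcov (p : Fin 7 × Fin 2) (i : Fin 7) (s : Fin 2) : Bool :=
  (gadj i p.1 && p.2 == s) || (p.1 == i && p.2 != s)

/-- No two gadget vertices dominate `Q \ {0}`. -/
lemma gadget_dom_lb : ∀ a b : Fin 7, ∃ i : Fin 7, i ≠ 0 ∧
    ¬(i = a ∨ i = b ∨ gadj i a = true ∨ gadj i b = true) := by decide

def pverts : List (Fin 7 × Fin 2) :=
  [(0,0),(0,1),(1,0),(1,1),(2,0),(2,1),(3,0),(3,1),(4,0),(4,1),(5,0),(5,1),(6,0),(6,1)]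

def ptgts : List (Fin 7 × Fin 2) :=
  [(4,0),(4,1),(3,0),(3,1),(1,0),(1,1),(2,0),(2,1),(5,0),(5,1),(6,0),(6,1)]

def pgood (a b c d : Fin 7 × Fin 2) : Bool :=
  ptgts.any fun t => !(pcov a t.1 t.2 || pcov b t.1 t.2 || pcov c t.1 t.2 || pcov d t.1 t.2)

def pokAll : Bool :=
  pverts.all fun a => pverts.all fun b => pverts.all fun c => pverts.all fun d => pgood a b c d

set_option maxRecDepth 100000 in
set_option maxHeartbeats 2000000 in
/-- No four prism vertices openly cover `(Q \ {0}) × Fin 2`. -/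
lemma pokAll_true : pokAll = true := by decide

lemma pverts_complete : ∀ p : Fin 7 × Fin 2, p ∈ pverts := by decide

lemma ptgts_ne : ∀ p ∈ ptgts, p.1 ≠ (0 : Fin 7) := by decide

/-- The chain of `k` gadgets. -/
def chainG (k : ℕ) : SimpleGraph (Fin k × Fin 7) where
  Adj x y := (x.1 = y.1 ∧ gadj x.2 y.2 = true) ∨
    (x.2 = 0 ∧ y.2 = 0 ∧ (x.1.val + 1 = y.1.val ∨ y.1.val + 1 = x.1.val))
  symm := by
    constructor
    rintro x y (⟨h1, h2⟩ | ⟨h1, h2, h3⟩)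
    · exact Or.inl ⟨h1.symm, by rw [gadj_symm]; exact h2⟩
    · exact Or.inr ⟨h2, h1, h3.symm⟩
  loopless := by
    constructor
    rintro x (⟨h1, h2⟩ | ⟨h1, h2, h3⟩)
    · rw [gadj_irrefl] at h2; exact Bool.false_ne_true h2
    · omega

/-- Extract at most two elements from a small finset. -/
lemma two_elems {α : Type*} [Inhabited α] (T : Finset α) (h : T.card ≤ 2) :
    ∃ a b : α, ∀ x ∈ T, x = a ∨ x = b := by
  have hmem : ∀ x ∈ T, x ∈ T.toList := fun x hx => Finset.mem_toList.mpr hx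
  have hlen : T.toList.length ≤ 2 := by rw [Finset.length_toList]; exact h
  rcases hl : T.toList with _ | ⟨a, _ | ⟨b, t⟩⟩
  · exact ⟨default, default,
      fun x hx => by rw [hl] at hmem; exact absurd (hmem x hx) (by simp)⟩
  · refine ⟨a, a, fun x hx => ?_⟩
    have := hmem x hx; rw [hl] at this; simp at this; exact Or.inl this
  · have ht : t = [] := by
      rw [hl] at hlen
      simp only [List.length_cons] at hlen
      exact List.eq_nil_of_length_eq_zero (by omega)
    subst ht
    refine ⟨a, b, fun x hx => ?_⟩
    have := hmem x hx; rw [hl] at this; simpa using this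
  
/-- Extract at most four elements from a small finset. -/
lemma four_elems {α : Type*} [Inhabited α] (T : Finset α) (h : T.card ≤ 4) :
    ∃ a b c d : α, ∀ x ∈ T, x = a ∨ x = b ∨ x = c ∨ x = d := by
  have hmem : ∀ x ∈ T, x ∈ T.toList := fun x hx => Finset.mem_toList.mpr hx
  have hlen : T.toList.length ≤ 4 := by rw [Finset.length_toList]; exact h
  rcases hl : T.toList with _ | ⟨a, _ | ⟨b, _ | ⟨c, _ | ⟨d, t⟩⟩⟩⟩
  · exact ⟨default, default, default, default,
      fun x hx => by rw [hl] at hmem; exact absurd (hmem x hx) (by simp)⟩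
  · refine ⟨a, a, a, a, fun x hx => ?_⟩
    have := hmem x hx; rw [hl] at this; simp at this; tauto
  · refine ⟨a, b, b, b, fun x hx => ?_⟩
    have := hmem x hx; rw [hl] at this; simp at this; tauto
  · refine ⟨a, b, c, c, fun x hx => ?_⟩
    have := hmem x hx; rw [hl] at this; simp at this; tauto
  · have ht : t = [] := by
      rw [hl] at hlen
      simp only [List.length_cons] at hlen
      exact List.eq_nil_of_length_eq_zero (by omega)
    subst ht
    refine ⟨a, b, c, d, fun x hx => ?_⟩
    have := hmem x hx; rw [hl] at this; simp at this; tauto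

/-- Local lower bound for domination: any set whose closed neighborhoods cover
`Q \ {0}` has at least 3 elements. -/
lemma dom_local (T : Finset (Fin 7))
    (hT : ∀ i : Fin 7, i ≠ 0 → i ∈ T ∨ ∃ j ∈ T, gadj i j = true) : 3 ≤ T.card := by
  by_contra hc
  obtain ⟨a, b, hab⟩ := two_elems T (by omega)
  obtain ⟨i, hi0, hbad⟩ := gadget_dom_lb a b
  rcases hT i hi0 with hin | ⟨j, hjT, hja⟩
  · rcases hab i hin with h | h
    · exact hbad (Or.inl h)
    · exact hbad (Or.inr (Or.inl h))
  · rcases hab j hjT with h | h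
    · subst h; exact hbad (Or.inr (Or.inr (Or.inl hja)))
    · subst h; exact hbad (Or.inr (Or.inr (Or.inr hja)))

/-- Local lower bound for total domination in the prism. -/
lemma prism_local (R : Finset (Fin 7 × Fin 2))
    (hR : ∀ (i : Fin 7) (s : Fin 2), i ≠ 0 → ∃ p ∈ R, pcov p i s = true) : 5 ≤ R.card := by
  by_contra hc
  obtain ⟨a, b, c, d, habcd⟩ := four_elems R (by omega)
  have hgood : pgood a b c d = true := by
    have h1 := List.all_eq_true.mp pokAll_true a (pverts_complete a)
    have h2 := List.all_eq_true.mp h1 b (pverts_complete b)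
    have h3 := List.all_eq_true.mp h2 c (pverts_complete c)
    exact List.all_eq_true.mp h3 d (pverts_complete d)
  obtain ⟨t, htm, hbool⟩ := List.any_eq_true.mp hgood
  obtain ⟨p, hpR, hpcov⟩ := hR t.1 t.2 (ptgts_ne t htm)
  have hfalse : (pcov a t.1 t.2 || pcov b t.1 t.2 || pcov c t.1 t.2 || pcov d t.1 t.2) = false := by
    simpa using hbool
  simp only [Bool.or_eq_false_iff] at hfalse
  rcases habcd p hpR with h | h | h | h <;> subst h <;>
    simp [hfalse.1.1.1, hfalse.1.1.2, hfalse.1.2, hfalse.2] at hpcov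
  
section chain

variable {k : ℕ}

lemma chain_dom_lower (S : Finset (Fin k × Fin 7)) (hS : IsDominatingSet (chainG k) S) :
    3 * k ≤ S.card := by
  have key : ∀ c : Fin k, 3 ≤ (S.filter (fun v => v.1 = c)).card := by
    intro c
    have h3 : 3 ≤ ((S.filter (fun v => v.1 = c)).image Prod.snd).card := by
      apply dom_local
      intro i hi
      by_cases hv : (c, i) ∈ S
      · exact Or.inl (Finset.mem_image.mpr ⟨(c, i), Finset.mem_filter.mpr ⟨hv, rfl⟩, rfl⟩)
      · obtain ⟨u, huS, hadj⟩ := hS (c, i) hv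
        rcases hadj with ⟨h1, h2⟩ | ⟨h1, _⟩
        · refine Or.inr ⟨u.2, Finset.mem_image.mpr ⟨u, Finset.mem_filter.mpr ⟨huS, h1.symm⟩, rfl⟩, h2⟩
        · exact absurd h1 hi
    exact le_trans h3 Finset.card_image_le
  calc 3 * k = ∑ _c : Fin k, 3 := by
        simp [Finset.sum_const, Finset.card_univ, mul_comm]
    _ ≤ ∑ c : Fin k, (S.filter (fun v => v.1 = c)).card := Finset.sum_le_sum (fun c _ => key c)
    _ = S.card := (Finset.card_eq_sum_card_fiberwise (fun x _ => Finset.mem_univ x.1)).symm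

lemma chain_td_lower (S : Finset ((Fin k × Fin 7) × Fin 2))
    (hS : IsTotalDominatingSet ((chainG k) □ K2) S) : 5 * k ≤ S.card := by
  have key : ∀ c : Fin k, 5 ≤ (S.filter (fun v => v.1.1 = c)).card := by
    intro c
    have h5 : 5 ≤ ((S.filter (fun v => v.1.1 = c)).image (fun v => (v.1.2, v.2))).card := by
      apply prism_local
      intro i s hi
      obtain ⟨u, huS, hadj⟩ := hS ((c, i), s)
      rw [SimpleGraph.boxProd_adj] at hadj
      rcases hadj with ⟨hG, h2⟩ | ⟨hK, h2⟩
      · rcases hG with ⟨hc, hg⟩ | ⟨h0, _⟩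
        · refine ⟨(u.1.2, u.2), Finset.mem_image.mpr
            ⟨u, Finset.mem_filter.mpr ⟨huS, hc.symm⟩, rfl⟩, ?_⟩
          simp only [pcov, Bool.or_eq_true, Bool.and_eq_true, beq_iff_eq]
          exact Or.inl ⟨hg, h2.symm⟩
        · exact absurd h0 hi
      · have hne : s ≠ u.2 := (SimpleGraph.top_adj _ _).mp hK
        refine ⟨(u.1.2, u.2), Finset.mem_image.mpr
          ⟨u, Finset.mem_filter.mpr ⟨huS, by rw [← h2]⟩, rfl⟩, ?_⟩
        simp only [pcov, Bool.or_eq_true, Bool.and_eq_true, beq_iff_eq, bne_iff_ne]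
        exact Or.inr ⟨by rw [← h2], fun hh => hne hh.symm⟩
    exact le_trans h5 Finset.card_image_le
  calc 5 * k = ∑ _c : Fin k, 5 := by
        simp [Finset.sum_const, Finset.card_univ, mul_comm]
    _ ≤ ∑ c : Fin k, (S.filter (fun v => v.1.1 = c)).card := Finset.sum_le_sum (fun c _ => key c)
    _ = S.card := (Finset.card_eq_sum_card_fiberwise (fun x _ => Finset.mem_univ x.1.1)).symm

/-- The dominating set `{1,3,5}` in each copy. -/
def chainD (k : ℕ) : Finset (Fin k × Fin 7) :=
  (Finset.univ : Finset (Fin k)) ×ˢ ({1, 3, 5} : Finset (Fin 7))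

lemma chainD_card : (chainD k).card = 3 * k := by
  rw [chainD, Finset.card_product]
  rw [show ({1, 3, 5} : Finset (Fin 7)).card = 3 by decide]
  simp [Finset.card_univ, mul_comm]

lemma chainD_dom : IsDominatingSet (chainG k) (chainD k) := by
  rintro ⟨c, i⟩ hv
  have hmem : ∀ j : Fin 7, j ∈ ({1, 3, 5} : Finset (Fin 7)) → (c, j) ∈ chainD k :=
    fun j hj => Finset.mem_product.mpr ⟨Finset.mem_univ _, hj⟩
  have hnot : i ∉ ({1, 3, 5} : Finset (Fin 7)) :=
    fun hi => hv (hmem i hi)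
  have adjG : ∀ j j' : Fin 7, gadj j j' = true → (chainG k).Adj (c, j) (c, j') :=
    fun j j' h => Or.inl ⟨rfl, h⟩
  fin_cases i
  · exact ⟨(c, 3), hmem 3 (by decide), adjG 0 3 (by decide)⟩
  · exact absurd (by decide) hnot
  · exact ⟨(c, 1), hmem 1 (by decide), adjG 2 1 (by decide)⟩
  · exact absurd (by decide) hnot
  · exact ⟨(c, 3), hmem 3 (by decide), adjG 4 3 (by decide)⟩
  · exact absurd (by decide) hnot
  · exact ⟨(c, 1), hmem 1 (by decide), adjG 6 1 (by decide)⟩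

/-- The per-copy total dominating pattern for the prism. -/
def chainP (k : ℕ) : Finset ((Fin k × Fin 7) × Fin 2) :=
  ((Finset.univ : Finset (Fin k)) ×ˢ
    ({(0,0),(1,1),(2,1),(3,0),(3,1)} : Finset (Fin 7 × Fin 2))).image
    (fun x => ((x.1, x.2.1), x.2.2))

lemma chainP_card : (chainP k).card = 5 * k := by
  rw [chainP, Finset.card_image_of_injective _ (by intro x y h; simp at h; exact Prod.ext h.1.1 (Prod.ext h.1.2 h.2)),
    Finset.card_product]
  rw [show ({(0,0),(1,1),(2,1),(3,0),(3,1)} : Finset (Fin 7 × Fin 2)).card = 5 by decide]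
  simp [Finset.card_univ, mul_comm]

lemma chainP_mem (c : Fin k) (j : Fin 7) (t : Fin 2)
    (h : (j, t) ∈ ({(0,0),(1,1),(2,1),(3,0),(3,1)} : Finset (Fin 7 × Fin 2))) :
    ((c, j), t) ∈ chainP k :=
  Finset.mem_image.mpr ⟨(c, (j, t)), Finset.mem_product.mpr ⟨Finset.mem_univ _, h⟩, rfl⟩

lemma chainP_td : IsTotalDominatingSet ((chainG k) □ K2) (chainP k) := by
  rintro ⟨⟨c, i⟩, s⟩
  have adjG : ∀ j j' : Fin 7, gadj j j' = true → (chainG k).Adj (c, j) (c, j') :=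
    fun j j' h => Or.inl ⟨rfl, h⟩
  have adjL : ∀ (j j' : Fin 7) (t : Fin 2), gadj j j' = true →
      (j', t) ∈ ({(0,0),(1,1),(2,1),(3,0),(3,1)} : Finset (Fin 7 × Fin 2)) →
      ∃ u ∈ chainP k, ((chainG k) □ K2).Adj ((c, j), t) u := by
    intro j j' t h hm
    exact ⟨((c, j'), t), chainP_mem c j' t hm,
      SimpleGraph.boxProd_adj.mpr (Or.inl ⟨adjG j j' h, rfl⟩)⟩
  have adjV : ∀ (j : Fin 7) (t t' : Fin 2), t ≠ t' →
      (j, t') ∈ ({(0,0),(1,1),(2,1),(3,0),(3,1)} : Finset (Fin 7 × Fin 2)) →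
      ∃ u ∈ chainP k, ((chainG k) □ K2).Adj ((c, j), t) u := by
    intro j t t' h hm
    exact ⟨((c, j), t'), chainP_mem c j t' hm,
      SimpleGraph.boxProd_adj.mpr (Or.inr ⟨(SimpleGraph.top_adj _ _).mpr h, rfl⟩)⟩
  fin_cases i <;> fin_cases s
  · exact adjL 0 3 0 (by decide) (by decide)
  · exact adjV 0 1 0 (by decide) (by decide)
  · exact adjV 1 0 1 (by decide) (by decide)
  · exact adjL 1 2 1 (by decide) (by decide)
  · exact adjV 2 0 1 (by decide) (by decide)
  · exact adjL 2 1 1 (by decide) (by decide)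
  · exact adjV 3 0 1 (by decide) (by decide)
  · exact adjV 3 1 0 (by decide) (by decide)
  · exact adjL 4 3 0 (by decide) (by decide)
  · exact adjL 4 3 1 (by decide) (by decide)
  · exact adjL 5 0 0 (by decide) (by decide)
  · exact adjL 5 2 1 (by decide) (by decide)
  · exact adjL 6 0 0 (by decide) (by decide)
  · exact adjL 6 1 1 (by decide) (by decide)

lemma chain_connected (hk : 1 ≤ k) : (chainG k).Connected := by
  have reach_in : ∀ (c : Fin k) (i : Fin 7), (chainG k).Reachable (c, 0) (c, i) := by
    intro c i
    have e : ∀ j j' : Fin 7, gadj j j' = true → (chainG k).Adj (c, j) (c, j') :=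
      fun j j' h => Or.inl ⟨rfl, h⟩
    fin_cases i
    · exact SimpleGraph.Reachable.refl _
    · exact ((e 0 6 (by decide)).reachable).trans ((e 6 1 (by decide)).reachable)
    · exact ((e 0 5 (by decide)).reachable).trans ((e 5 2 (by decide)).reachable)
    · exact (e 0 3 (by decide)).reachable
    · exact ((e 0 3 (by decide)).reachable).trans ((e 3 4 (by decide)).reachable)
    · exact (e 0 5 (by decide)).reachable
    · exact (e 0 6 (by decide)).reachable
  have h0 : (0 : ℕ) < k := hk
  have reach_chain : ∀ n (h : n < k), (chainG k).Reachable (⟨0, h0⟩, 0) (⟨n, h⟩, 0) := by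
    intro n
    induction n with
    | zero => intro h; exact SimpleGraph.Reachable.refl _
    | succ m ih =>
        intro h
        have hm : m < k := Nat.lt_of_succ_lt h
        refine (ih hm).trans (SimpleGraph.Adj.reachable ?_)
        exact Or.inr ⟨rfl, rfl, Or.inl rfl⟩
  rw [SimpleGraph.connected_iff]
  refine ⟨?_, ⟨(⟨0, h0⟩, 0)⟩⟩
  rintro ⟨c, i⟩ ⟨c', i'⟩
  have h1 := (reach_in c i).symm
  have h2 := reach_chain c.val c.isLt
  have h3 := reach_chain c'.val c'.isLt
  have hc : (⟨c.val, c.isLt⟩ : Fin k) = c := Fin.eta c c.isLt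
  have hc' : (⟨c'.val, c'.isLt⟩ : Fin k) = c' := Fin.eta c' c'.isLt
  rw [hc] at h2; rw [hc'] at h3
  exact h1.trans (h2.symm.trans (h3.trans (reach_in c' i')))

lemma chain_dom_eq : dominationNumber (chainG k) = 3 * k := by
  have hmem : 3 * k ∈ {n : ℕ | ∃ S : Finset (Fin k × Fin 7),
      IsDominatingSet (chainG k) S ∧ S.card = n} :=
    ⟨chainD k, chainD_dom, chainD_card⟩
  refine le_antisymm (Nat.sInf_le hmem) (le_csInf ⟨_, hmem⟩ ?_)
  rintro n ⟨S, hS, rfl⟩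
  exact chain_dom_lower S hS

lemma chain_td_eq : totalDominationNumber ((chainG k) □ K2) = 5 * k := by
  have hmem : 5 * k ∈ {n : ℕ | ∃ S : Finset ((Fin k × Fin 7) × Fin 2),
      IsTotalDominatingSet ((chainG k) □ K2) S ∧ S.card = n} :=
    ⟨chainP k, chainP_td, chainP_card⟩
  refine le_antisymm (Nat.sInf_le hmem) (le_csInf ⟨_, hmem⟩ ?_)
  rintro n ⟨S, hS, rfl⟩
  exact chain_td_lower S hS

end chain

/-- For each `k ≥ 1`, there exists a finite connected graph `G_k` with
`2 γ(G_k) - γ_t(G_k □ K₂) = k`. -/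
theorem exists_connected_graph_prism_gap (k : ℕ) (hk : 1 ≤ k) :
    ∃ (V : Type) (_ : Fintype V) (G : SimpleGraph V), G.Connected ∧
      (2 * dominationNumber G : ℤ) - totalDominationNumber (G □ K2) = k := by
  refine ⟨Fin k × Fin 7, inferInstance, chainG k, chain_connected hk, ?_⟩
  rw [chain_dom_eq, chain_td_eq]
  push_cast
  ring
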